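/- Let E₁,…,Eₙ be effects on a Hilbert space H. If the binary observables O^{E_i} = (E_i, I−E_i) are coexistent, i.e., there exists a POVM M : Σ̄ → L(H) and sets Z₁,…,Zₙ ∈ Σ̄ with E_i = M(Z_i) for all i, then the n observables O^{E_1},…,O^{E_n} are jointly measurable: the map N({(x₁,…,xₙ)}) := M(Z₁^{x₁} ∩ ⋯ ∩ Zₙ^{xₙ}) (where Z^{+1}=Z, Z^{-1}=Ω̄∖Z) is a POVM on {−1,+1}ⁿ whose i-th marginal is O^{E_i}. -/

import Mathlib

open scoped InnerProductSpace

/-- A positive-operator-valued measure (normalized, defined on all sets, vanishing on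
non-measurable sets). -/
structure POVM (Ω : Type*) [MeasurableSpace Ω]
    (H : Type*) [NormedAddCommGroup H] [InnerProductSpace ℂ H] [CompleteSpace H] where
  toFun : Set Ω → (H →L[ℂ] H)
  isPositive' : ∀ s, (toFun s).IsPositive
  empty' : toFun ∅ = 0
  total' : toFun Set.univ = 1
  not_measurable' : ∀ s, ¬ MeasurableSet s → toFun s = 0
  m_iUnion' : ∀ f : ℕ → Set Ω, (∀ n, MeasurableSet (f n)) → Pairwise (Function.onFun Disjoint f) →
    ∀ x : H, HasSum (fun n => toFun (f n) x) (toFun (⋃ n, f n) x)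

variable {Ω Ω' Ωb : Type*} [MeasurableSpace Ω] [MeasurableSpace Ω'] [MeasurableSpace Ωb]
variable {H : Type*} [NormedAddCommGroup H] [InnerProductSpace ℂ H] [CompleteSpace H]

/-- Sharp observable: a projection-valued measure. -/
def POVM.IsSharp (P : POVM Ω H) : Prop := ∀ s, IsIdempotentElem (P.toFun s)

/-- A POVM is discrete if it is concentrated on a countable set of points. -/
def POVM.Discrete (A : POVM Ω H) : Prop :=
  ∃ D : Set Ω, D.Countable ∧ ∀ s, MeasurableSet s → s ∩ D = ∅ → A.toFun s = 0

/-- Extremality in the convex set of POVMs on `(Ω, Σ)`. -/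
def POVM.Extreme (A : POVM Ω H) : Prop :=
  ∀ (A₁ A₂ : POVM Ω H) (t : ℝ), 0 < t → t < 1 →
    (∀ s, A.toFun s = (t : ℂ) • A₁.toFun s + ((1 - t : ℝ) : ℂ) • A₂.toFun s) →
    A₁.toFun = A.toFun ∧ A₂.toFun = A.toFun

/-- Joint measurability: a POVM on the product σ-algebra having `A` and `B` as marginals. -/
def JointlyMeasurable (A : POVM Ω H) (B : POVM Ω' H) : Prop :=
  ∃ N : POVM (Ω × Ω') H,
    (∀ X, MeasurableSet X → N.toFun (X ×ˢ Set.univ) = A.toFun X) ∧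
    (∀ Y, MeasurableSet Y → N.toFun (Set.univ ×ˢ Y) = B.toFun Y)

/-- `ran A ⊆ ran M`. -/
def RanSubset (A : POVM Ω H) (M : POVM Ωb H) : Prop :=
  ∀ X, MeasurableSet X → ∃ Z, MeasurableSet Z ∧ M.toFun Z = A.toFun X

/-- Coexistence: a common mother observable on some measurable space contains both ranges. -/
def Coexistent (A : POVM Ω H) (B : POVM Ω' H) : Prop :=
  ∃ (Ωm : Type) (_ : MeasurableSpace Ωm) (M : POVM Ωm H), RanSubset A M ∧ RanSubset B M


section Aux
variable {Ωa : Type*} [MeasurableSpace Ωa]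
variable {H : Type*} [NormedAddCommGroup H] [InnerProductSpace ℂ H] [CompleteSpace H]

lemma POVM.add_of_disjoint (M : POVM Ωa H) {s t : Set Ωa} (hs : MeasurableSet s)
    (ht : MeasurableSet t) (hd : Disjoint s t) :
    M.toFun (s ∪ t) = M.toFun s + M.toFun t := by
  ext v
  classical
  set f : ℕ → Set Ωa := fun n => if n = 0 then s else if n = 1 then t else ∅ with hf
  have hmeas : ∀ n, MeasurableSet (f n) := by
    intro n
    simp only [hf]
    split_ifs <;> simp [hs, ht]
  have hpw : Pairwise (Function.onFun Disjoint f) := by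
    intro a b hab
    simp only [Function.onFun, hf]
    split_ifs <;> simp_all [hd, hd.symm]
  have hU : (⋃ n, f n) = s ∪ t := by
    ext ω
    simp only [Set.mem_iUnion, hf]
    constructor
    · rintro ⟨n, hn⟩
      split_ifs at hn <;> simp_all
    · rintro (h | h)
      · exact ⟨0, by simp [h]⟩
      · exact ⟨1, by simp [h]⟩
  have h1 := M.m_iUnion' f hmeas hpw v
  rw [hU] at h1
  have h2 : HasSum (fun n => M.toFun (f n) v) (M.toFun s v + M.toFun t v) := by
    have : (∑ n ∈ ({0, 1} : Finset ℕ), M.toFun (f n) v)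
        = M.toFun s v + M.toFun t v := by
      simp [hf]
    rw [← this]
    apply hasSum_sum_of_ne_finset_zero
    intro b hb
    simp only [Finset.mem_insert, Finset.mem_singleton, not_or] at hb
    simp [hf, hb.1, hb.2, M.empty']
  exact h1.unique h2

lemma POVM.sum_of_disjoint (M : POVM Ωa H) {ι : Type*} [DecidableEq ι] (S : Finset ι)
    (g : ι → Set Ωa) (hm : ∀ i, MeasurableSet (g i))
    (hd : ∀ i ∈ S, ∀ j ∈ S, i ≠ j → Disjoint (g i) (g j)) :
    M.toFun (⋃ i ∈ S, g i) = ∑ i ∈ S, M.toFun (g i) := by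
  classical
  induction S using Finset.induction_on with
  | empty => simp [M.empty']
  | @insert a S ha ih =>
    rw [Finset.sum_insert ha]
    have hU : (⋃ i ∈ insert a S, g i) = g a ∪ ⋃ i ∈ S, g i := by
      simp [Set.biUnion_insert]
    rw [hU, M.add_of_disjoint (hm a) ((S.measurableSet_biUnion (fun i _ => hm i)))]
    · rw [ih (fun i hi j hj hij => hd i (Finset.mem_insert_of_mem hi) j
        (Finset.mem_insert_of_mem hj) hij)]
    · rw [Set.disjoint_iUnion_right]
      intro i
      rw [Set.disjoint_iUnion_right]
      intro hi
      exact hd a (Finset.mem_insert_self a S) i (Finset.mem_insert_of_mem hi)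
        (fun h => ha (h ▸ hi))

end Aux

/-- Let `E₁, …, Eₙ` be effects on `H`.  If the binary observables
`Oᴱⁱ = (Eᵢ, 1 - Eᵢ)` are coexistent, i.e. there is a POVM `M` and sets `Zᵢ` with
`Eᵢ = M(Zᵢ)`, then `N(x₁,…,xₙ) := M(Z₁^{x₁} ∩ ⋯ ∩ Zₙ^{xₙ})` (with `Z^{+1} = Z`,
`Z^{-1} = Zᶜ`) is a POVM on `{−1,+1}ⁿ` whose `i`-th marginal at `+1` is `Eᵢ` (so the `n`
binary observables are jointly measurable). -/
theorem binary_coexistent_implies_jointly_measurable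
    {H : Type*} [NormedAddCommGroup H] [InnerProductSpace ℂ H] [CompleteSpace H]
    {n : ℕ} (E : Fin n → (H →L[ℂ] H))
    (hE : ∀ i, (E i).IsPositive ∧ ((1 : H →L[ℂ] H) - E i).IsPositive)
    (Ωm : Type*) [MeasurableSpace Ωm] (M : POVM Ωm H)
    (Z : Fin n → Set Ωm) (hZ : ∀ i, MeasurableSet (Z i))
    (hMZ : ∀ i, M.toFun (Z i) = E i) :
    (∀ x : Fin n → Bool,
      (M.toFun (⋂ i, if x i then Z i else (Z i)ᶜ)).IsPositive) ∧
    (∑ x : Fin n → Bool, M.toFun (⋂ i, if x i then Z i else (Z i)ᶜ)) = 1 ∧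
    (∀ i : Fin n,
      (∑ x ∈ Finset.univ.filter (fun x : Fin n → Bool => x i = true),
        M.toFun (⋂ i, if x i then Z i else (Z i)ᶜ)) = E i) := by

  classical
  set A : (Fin n → Bool) → Set Ωm := fun x => ⋂ i, if x i then Z i else (Z i)ᶜ with hA
  have hAm : ∀ x, MeasurableSet (A x) := by
    intro x
    apply MeasurableSet.iInter
    intro i
    by_cases h : x i <;> simp [h, hZ i, (hZ i).compl]
  have hmem : ∀ ω x, ω ∈ A x ↔ ∀ i, (ω ∈ Z i ↔ x i = true) := by
    intro ω x
    simp only [hA, Set.mem_iInter]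
    constructor
    · intro h i
      have := h i
      by_cases hx : x i <;> simp_all
    · intro h i
      by_cases hx : x i <;> simp_all [h i]
  have hdisj : ∀ x ∈ (Finset.univ : Finset (Fin n → Bool)), ∀ y ∈ Finset.univ,
      x ≠ y → Disjoint (A x) (A y) := by
    intro x _ y _ hxy
    rw [Set.disjoint_left]
    intro ω hx hy
    apply hxy
    funext i
    have h1 := (hmem ω x).1 hx i
    have h2 := (hmem ω y).1 hy i
    by_cases h : ω ∈ Z i
    · rw [h1.1 h, h2.1 h]
    · cases hxi : x i
      · cases hyi : y i
        · rfl
        · exact absurd (h2.2 hyi) h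
      · exact absurd (h1.2 hxi) h
  refine ⟨fun x => M.isPositive' _, ?_, ?_⟩
  · have hU : (⋃ x ∈ (Finset.univ : Finset (Fin n → Bool)), A x) = Set.univ := by
      ext ω
      simp only [Set.mem_iUnion, Set.mem_univ, iff_true]
      refine ⟨fun i => decide (ω ∈ Z i), Finset.mem_univ _, ?_⟩
      rw [hmem]
      intro i
      simp
    have := M.sum_of_disjoint Finset.univ A hAm hdisj
    rw [hU, M.total'] at this
    exact this.symm
  · intro i
    have hU : (⋃ x ∈ Finset.univ.filter (fun x : Fin n → Bool => x i = true), A x)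
        = Z i := by
      ext ω
      simp only [Set.mem_iUnion, Finset.mem_filter, Finset.mem_univ, true_and]
      constructor
      · rintro ⟨x, hxi, hx⟩
        exact ((hmem ω x).1 hx i).2 hxi
      · intro h
        refine ⟨fun j => decide (ω ∈ Z j), by simp [h], ?_⟩
        rw [hmem]
        intro j
        simp
    have := M.sum_of_disjoint (Finset.univ.filter (fun x : Fin n → Bool => x i = true))
      A hAm (fun x _ y _ hxy => hdisj x (Finset.mem_univ x) y (Finset.mem_univ y) hxy)
    rw [hU, hMZ i] at this
    exact this.symm
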